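/- For every natural number k ≥ 0, π/4 = 2·arctan(1/φ^{2k+1}) + arctan((L_{2k+1} − 2)/(L_{2k+1} + 2)). -/

import Mathlib

open Real

/-- The Lucas numbers: `L 0 = 2`, `L 1 = 1`, `L (n+2) = L (n+1) + L n`. -/
def L : ℕ → ℝ
  | 0 => 2
  | 1 => 1
  | (n + 2) => L (n + 1) + L n

/-- The golden ratio `φ = (1 + √5)/2`. -/
noncomputable def phi : ℝ := (1 + Real.sqrt 5) / 2

noncomputable def psi : ℝ := (1 - Real.sqrt 5) / 2

lemma sqrt5_sq : Real.sqrt 5 * Real.sqrt 5 = 5 :=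
  Real.mul_self_sqrt (by norm_num)

lemma sqrt5_gt : (2 : ℝ) < Real.sqrt 5 := by
  nlinarith [sqrt5_sq, Real.sqrt_nonneg 5]

lemma phi_gt_one : (1 : ℝ) < phi := by
  unfold phi; nlinarith [sqrt5_gt]

lemma L_eq : ∀ n, L n = phi ^ n + psi ^ n ∧ L (n + 1) = phi ^ (n + 1) + psi ^ (n + 1) := by
  intro n
  induction n with
  | zero =>
    constructor
    · show (2:ℝ) = _; norm_num
    · simp only [L, pow_one]; unfold phi psi; ring
  | succ n ih =>
    obtain ⟨h1, h2⟩ := ih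
    refine ⟨h2, ?_⟩
    have hL : L (n + 2) = L (n + 1) + L n := rfl
    have hphi : phi ^ (n + 2) = phi ^ (n + 1) + phi ^ n := by
      have : phi * phi = phi + 1 := by unfold phi; nlinarith [sqrt5_sq]
      calc phi ^ (n + 2) = phi ^ n * (phi * phi) := by ring
        _ = phi ^ n * (phi + 1) := by rw [this]
        _ = phi ^ (n + 1) + phi ^ n := by ring
    have hpsi : psi ^ (n + 2) = psi ^ (n + 1) + psi ^ n := by
      have : psi * psi = psi + 1 := by unfold psi; nlinarith [sqrt5_sq]
      calc psi ^ (n + 2) = psi ^ n * (psi * psi) := by ring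
        _ = psi ^ n * (psi + 1) := by rw [this]
        _ = psi ^ (n + 1) + psi ^ n := by ring
    rw [hL, hphi, hpsi, h1, h2]; ring

lemma L_odd (k : ℕ) : L (2 * k + 1) = phi ^ (2 * k + 1) - 1 / phi ^ (2 * k + 1) := by
  have hφ : (0 : ℝ) < phi := lt_trans one_pos phi_gt_one
  have hmul : phi * psi = -1 := by unfold phi psi; nlinarith [sqrt5_sq]
  have hpsi : psi = -(1 / phi) := by
    field_simp
    linarith [hmul]
  rw [(L_eq (2 * k + 1)).1, hpsi]
  rw [Odd.neg_pow ⟨k, by ring⟩, div_pow, one_pow]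
  ring

lemma key (x : ℝ) (hx : 1 < x) :
    π / 4 = 2 * arctan (1 / x) +
      arctan ((x - 1 / x - 2) / (x - 1 / x + 2)) := by
  have hx0 : (0 : ℝ) < x := by linarith
  have hne : x ≠ 0 := ne_of_gt hx0
  have hsq : (0 : ℝ) < x ^ 2 - 1 := by nlinarith
  have hd2 : (0 : ℝ) < x ^ 2 + 2 * x - 1 := by nlinarith
  have hd2' : x ^ 2 + 2 * x - 1 ≠ 0 := ne_of_gt hd2
  have hd1' : x ^ 2 - 1 ≠ 0 := ne_of_gt hsq
  have hdd : (0 : ℝ) < x - 1 / x + 2 := by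
    have h1 : 1 / x < 1 := by rw [div_lt_one hx0]; exact hx
    linarith
  have hdd' : x - 1 / x + 2 ≠ 0 := ne_of_gt hdd
  have htt : (1 / x) * (1 / x) < 1 := by
    rw [div_mul_div_comm, div_lt_one (by positivity)]
    nlinarith
  have ha : 2 * arctan (1 / x) = arctan (2 * x / (x ^ 2 - 1)) := by
    rw [two_mul, arctan_add htt]
    congr 1
    rw [div_eq_div_iff (by linarith) hd1']
    field_simp
    ring
  have hb : (x - 1 / x - 2) / (x - 1 / x + 2) = (x ^ 2 - 2 * x - 1) / (x ^ 2 + 2 * x - 1) := by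
    rw [div_eq_div_iff hdd' hd2']
    field_simp
    ring
  rw [ha, hb]
  have hab1 : 1 - (2 * x / (x ^ 2 - 1)) * ((x ^ 2 - 2 * x - 1) / (x ^ 2 + 2 * x - 1)) =
      (x ^ 2 + 1) ^ 2 / ((x ^ 2 - 1) * (x ^ 2 + 2 * x - 1)) := by
    rw [div_mul_div_comm, one_sub_div (mul_ne_zero hd1' hd2')]
    congr 1
    ring
  have hab : (2 * x / (x ^ 2 - 1)) * ((x ^ 2 - 2 * x - 1) / (x ^ 2 + 2 * x - 1)) < 1 := by
    have hpos : (0 : ℝ) < (x ^ 2 + 1) ^ 2 / ((x ^ 2 - 1) * (x ^ 2 + 2 * x - 1)) := by positivity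
    linarith [hab1 ▸ hpos]
  rw [arctan_add hab]
  have hargs : (2 * x / (x ^ 2 - 1) + (x ^ 2 - 2 * x - 1) / (x ^ 2 + 2 * x - 1)) /
      (1 - 2 * x / (x ^ 2 - 1) * ((x ^ 2 - 2 * x - 1) / (x ^ 2 + 2 * x - 1))) = 1 := by
    rw [hab1, div_eq_one_iff_eq (by positivity)]
    rw [div_add_div _ _ hd1' hd2']
    congr 1
    ring
  rw [hargs, arctan_one]

theorem pi_four_eq_arctan_phi_odd (k : ℕ) :
    π / 4 = 2 * arctan (1 / phi ^ (2 * k + 1)) +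
      arctan ((L (2 * k + 1) - 2) / (L (2 * k + 1) + 2)) := by
  have hx : 1 < phi ^ (2 * k + 1) := one_lt_pow₀ phi_gt_one (by omega)
  have := key (phi ^ (2 * k + 1)) hx
  rw [L_odd k]
  convert this using 4
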